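/- arXiv:gr-qc/9807001 — 3 statements merged into one kernel-verified Lean document; each statement's English description precedes it below -/
import Mathlib

section
/- Let j : ℝ → ℝ be twice differentiable. If j''(r) − 2 = 0 and 2r² + r²·j''(r) − 4r·j'(r) + 4·j(r) = 0 hold for all r, then there exists a constant d₁ such that j(r) = r² + d₁·r for all r. -/
theorem stmt_1 (j : ℝ → ℝ) (hj : Differentiable ℝ j)
    (hj' : Differentiable ℝ (deriv j))
    (h1 : ∀ r : ℝ, deriv (deriv j) r - 2 = 0)
    (h2 : ∀ r : ℝ, 2 * r ^ 2 + r ^ 2 * deriv (deriv j) r - 4 * r * deriv j r + 4 * j r = 0) :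
    ∃ d₁ : ℝ, ∀ r : ℝ, j r = r ^ 2 + d₁ * r := by
  set c := deriv j 0 with hc
  have hderiv : ∀ r : ℝ, deriv j r = 2 * r + c := by
    have hconst : ∀ r : ℝ, deriv j r - 2 * r = deriv j 0 - 2 * 0 := by
      intro r
      have : ∀ x : ℝ, deriv (fun y => deriv j y - 2 * y) x = 0 := by
        intro x
        rw [deriv_fun_sub (hj' x) (by fun_prop)]
        have h2x : deriv (fun y : ℝ => 2 * y) x = 2 := by
          rw [deriv_const_mul _ differentiable_id.differentiableAt]
          simp
        rw [h2x]
        exact h1 x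
      exact is_const_of_deriv_eq_zero (by fun_prop) this r 0
    intro r
    have := hconst r
    linarith
  refine ⟨c, fun r => ?_⟩
  have h2r := h2 r
  have h1r := h1 r
  have hd := hderiv r
  have : deriv (deriv j) r = 2 := by linarith
  rw [this, hd] at h2r
  nlinarith [h2r]
end

section
/- Fix a ≠ 0 and a function k : ℝ → ℝ. The expression E(r,χ) = (2r − k'(r))·a⁴·χ⁴ + (2k(r) − k'(r)·r)·2·a·r·χ² − k'(r)·r⁴ + 2r·k(r)² (the numerator of the G_{rχ} Einstein tensor component, up to nonvanishing factors) vanishes for all r > 0 and all χ ∈ (−1,1) if and only if k(r) = r² for all r > 0. -/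
theorem stmt_3 (a : ℝ) (ha : a ≠ 0) (k k' : ℝ → ℝ)
    (hk : ∀ r > (0 : ℝ), HasDerivAt k (k' r) r) :
    (∀ r > (0 : ℝ), ∀ χ ∈ Set.Ioo (-1 : ℝ) 1,
        (2 * r - k' r) * a ^ 4 * χ ^ 4 + (2 * k r - k' r * r) * 2 * a * r * χ ^ 2
          - k' r * r ^ 4 + 2 * r * (k r) ^ 2 = 0)
      ↔ (∀ r > (0 : ℝ), k r = r ^ 2) := by
  constructor
  · intro h r hr
    have h0 := h r hr 0 ⟨by norm_num, by norm_num⟩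
    have h1 := h r hr (1/2) ⟨by norm_num, by norm_num⟩
    have h2 := h r hr (1/4) ⟨by norm_num, by norm_num⟩
    have hBz : (2 * k r - k' r * r) * (2 * a * r) = 0 := by ring_nf at h0 h1 h2 ⊢; linarith
    have hAz : (2 * r - k' r) * a ^ 4 = 0 := by ring_nf at h0 h1 h2 ⊢; linarith
    have h2ar : (2 : ℝ) * a * r ≠ 0 := by positivity
    have hB' : 2 * k r - k' r * r = 0 := by
      rcases mul_eq_zero.mp hBz with h | h
      · exact h
      · exact absurd h h2ar
    have hA' : 2 * r - k' r = 0 := by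
      rcases mul_eq_zero.mp hAz with h | h
      · exact h
      · exact absurd h (pow_ne_zero _ ha)
    linear_combination hB' / 2 - (r / 2) * hA'
  · intro h r hr χ hχ
    have hk2 : HasDerivAt k (2 * r) r := by
      have : HasDerivAt (fun x : ℝ => x ^ 2) (2 * r) r := by
        simpa using hasDerivAt_pow 2 r
      refine this.congr_of_eventuallyEq ?_
      filter_upwards [Ioi_mem_nhds hr] with x hx
      exact h x hx
    have hk' : k' r = 2 * r := (hk r hr).unique hk2
    have hkr : k r = r ^ 2 := h r hr
    rw [hk', hkr]; ring
end

section
/- Define e^{2λ(r,χ)} = Σ/(j(r) + a²χ²) and e^{Φ(r,χ)} = √(Σ(j(r) + a²χ²))/(k(r) + a²χ²) with Σ = r² + a²χ². Then g(r) := −e^{λ}(Σ + a²(1−χ²)e^{λ+Φ})/(e^{Φ}(Σ + a²(1−χ²)e^{2λ})) simplifies to g(r) = −(k(r) + a²)/(j(r) + a²); in particular g is independent of χ. -/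
set_option maxHeartbeats 2000000 in
theorem stmt_13 (a r χ : ℝ) (j k : ℝ → ℝ) (hχ : χ ∈ Set.Ioo (-1 : ℝ) 1)
    (hS : 0 < r ^ 2 + a ^ 2 * χ ^ 2)
    (hj : 0 < j r + a ^ 2 * χ ^ 2)
    (hk : k r + a ^ 2 * χ ^ 2 ≠ 0)
    (hja : j r + a ^ 2 ≠ 0) :
    let S : ℝ := r ^ 2 + a ^ 2 * χ ^ 2
    let eL : ℝ := Real.sqrt (S / (j r + a ^ 2 * χ ^ 2))
    let eF : ℝ := Real.sqrt (S * (j r + a ^ 2 * χ ^ 2)) / (k r + a ^ 2 * χ ^ 2);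
    -eL * (S + a ^ 2 * (1 - χ ^ 2) * (eL * eF)) / (eF * (S + a ^ 2 * (1 - χ ^ 2) * eL ^ 2))
      = -(k r + a ^ 2) / (j r + a ^ 2) := by
  intro S eL eF
  set J : ℝ := j r + a ^ 2 * χ ^ 2 with hJdef
  set K : ℝ := k r + a ^ 2 * χ ^ 2 with hKdef
  have hSpos : (0:ℝ) < S := hS
  have hsS : Real.sqrt S ^ 2 = S := Real.sq_sqrt hSpos.le
  have hsJ : Real.sqrt J ^ 2 = J := Real.sq_sqrt hj.le
  have hsSpos : 0 < Real.sqrt S := Real.sqrt_pos.mpr hSpos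
  have hsJpos : 0 < Real.sqrt J := Real.sqrt_pos.mpr hj
  have heL : eL = Real.sqrt S / Real.sqrt J := by
    show Real.sqrt (S / J) = _
    rw [Real.sqrt_div hSpos.le]
  have heF : eF = Real.sqrt S * Real.sqrt J / K := by
    show Real.sqrt (S * J) / K = _
    rw [Real.sqrt_mul hSpos.le]
  have hka : k r + a ^ 2 = K + a ^ 2 * (1 - χ ^ 2) := by rw [hKdef]; ring
  have hjaK : j r + a ^ 2 = J + a ^ 2 * (1 - χ ^ 2) := by rw [hJdef]; ring
  have hja' : J + a ^ 2 * (1 - χ ^ 2) ≠ 0 := hjaK ▸ hja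
  rw [heL, heF, hka, hjaK]
  set u := Real.sqrt S with hu
  set v := Real.sqrt J with hv
  rw [← hsS, ← hsJ]
  have hune : u ≠ 0 := hsSpos.ne'
  have hvne : v ≠ 0 := hsJpos.ne'
  have hja2 : v ^ 2 + a ^ 2 * (1 - χ ^ 2) ≠ 0 := hsJ ▸ hja'
  clear_value u v K J S eL eF
  set A := a ^ 2 * (1 - χ ^ 2) with hA
  have hv2 : v ^ 2 ≠ 0 := pow_ne_zero 2 hvne
  have h1 : u / v * (u * v / K) = u ^ 2 / K := by
    rw [div_mul_div_comm, div_eq_div_iff (mul_ne_zero hvne hk) hk]; ring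
  have h2 : (u / v) ^ 2 = u ^ 2 / v ^ 2 := div_pow u v 2
  rw [h1, h2]
  have h3 : u ^ 2 + A * (u ^ 2 / K) = u ^ 2 * (K + A) / K := by
    rw [eq_div_iff hk, add_mul, mul_assoc, div_mul_cancel₀ _ hk]; ring
  have h4 : u ^ 2 + A * (u ^ 2 / v ^ 2) = u ^ 2 * (v ^ 2 + A) / v ^ 2 := by
    rw [eq_div_iff hv2, add_mul, mul_assoc, div_mul_cancel₀ _ hv2]; ring
  rw [h3, h4]
  have h5' : u / v * (u ^ 2 * (K + A) / K) = u ^ 3 * (K + A) / (v * K) := by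
    rw [div_mul_div_comm, div_eq_div_iff (mul_ne_zero hvne hk) (mul_ne_zero hvne hk)]
    ring
  have h5 : -(u / v) * (u ^ 2 * (K + A) / K) = -(u ^ 3 * (K + A)) / (v * K) := by
    rw [neg_mul, h5', neg_div]
  have h6 : u * v / K * (u ^ 2 * (v ^ 2 + A) / v ^ 2) = u ^ 3 * (v ^ 2 + A) / (K * v) := by
    rw [div_mul_div_comm, div_eq_div_iff (mul_ne_zero hk hv2) (mul_ne_zero hk hvne)]
    ring
  rw [h5, h6]
  have hD : u ^ 3 * (v ^ 2 + A) / (K * v) ≠ 0 :=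
    div_ne_zero (mul_ne_zero (pow_ne_zero 3 hune) hja2) (mul_ne_zero hk hvne)
  rw [div_eq_div_iff hD hja2]
  ring
end
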